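/- The map H × ℝ≥0 → ℝ, (f, x) ↦ (Ψf)(x), is jointly continuous, and so is the map (f, x) ↦ ∂_x(Ψf)(x) = (ι f)(x) · exp(−∫₀ˣ (ι f)(s) ds). -/

import Mathlib

set_option maxHeartbeats 1000000


open scoped NNReal
open Filter Topology MeasureTheory

lemma semigroup_joint_cont {H : Type*} [NormedAddCommGroup H] [NormedSpace ℝ H]
    [CompleteSpace H] (S : ℝ≥0 → H →L[ℝ] H)
    (hScont : ∀ f : H, Continuous fun h : ℝ≥0 => S h f) :
    Continuous fun p : H × ℝ≥0 => S p.2 p.1 := by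
  rw [continuous_iff_continuousAt]
  rintro ⟨f₀, x₀⟩
  obtain ⟨C, hC0, hC⟩ : ∃ C, 0 ≤ C ∧ ∀ x : ℝ≥0, x ≤ x₀ + 1 → ‖S x‖ ≤ C := by
    obtain ⟨C, hC⟩ := banach_steinhaus
      (g := fun x : Set.Icc (0 : ℝ≥0) (x₀ + 1) => S x) (fun f => by
        obtain ⟨M, hM⟩ := (isCompact_Icc (a := (0:ℝ≥0)) (b := x₀ + 1)).exists_bound_of_continuousOn
          ((hScont f).continuousOn (s := Set.Icc 0 (x₀+1)))
        exact ⟨M, fun i => hM i i.2⟩)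
    refine ⟨max C 0, le_max_right _ _, fun x hx => ?_⟩
    exact le_trans (hC ⟨x, Set.mem_Icc.2 ⟨zero_le, hx⟩⟩) (le_max_left _ _)
  rw [ContinuousAt, tendsto_iff_norm_sub_tendsto_zero]
  have hev : ∀ᶠ p : H × ℝ≥0 in 𝓝 (f₀, x₀),
      ‖S p.2 p.1 - S x₀ f₀‖ ≤ C * ‖p.1 - f₀‖ + ‖S p.2 f₀ - S x₀ f₀‖ := by
    have hx : ∀ᶠ p : H × ℝ≥0 in 𝓝 (f₀, x₀), p.2 ≤ x₀ + 1 := by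
      have : Set.Iic (x₀ + 1) ∈ 𝓝 x₀ :=
        Iic_mem_nhds (lt_add_of_pos_right _ one_pos)
      exact continuous_snd.tendsto (f₀, x₀) this
    filter_upwards [hx] with p hp
    calc ‖S p.2 p.1 - S x₀ f₀‖
        = ‖S p.2 (p.1 - f₀) + (S p.2 f₀ - S x₀ f₀)‖ := by
          congr 1; rw [map_sub]; abel
      _ ≤ ‖S p.2 (p.1 - f₀)‖ + ‖S p.2 f₀ - S x₀ f₀‖ := norm_add_le _ _
      _ ≤ C * ‖p.1 - f₀‖ + ‖S p.2 f₀ - S x₀ f₀‖ := by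
          gcongr
          exact le_trans ((S p.2).le_opNorm _) (by gcongr; exact hC _ hp)
  have hlim : Tendsto (fun p : H × ℝ≥0 => C * ‖p.1 - f₀‖ + ‖S p.2 f₀ - S x₀ f₀‖)
      (𝓝 (f₀, x₀)) (𝓝 0) := by
    have h1 : Tendsto (fun p : H × ℝ≥0 => C * ‖p.1 - f₀‖) (𝓝 (f₀, x₀)) (𝓝 (C * ‖f₀ - f₀‖)) :=
      (tendsto_const_nhds.mul ((continuous_fst.sub continuous_const).norm.tendsto _))
    have h2 : Tendsto (fun p : H × ℝ≥0 => ‖S p.2 f₀ - S x₀ f₀‖) (𝓝 (f₀, x₀))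
        (𝓝 ‖S x₀ f₀ - S x₀ f₀‖) :=
      ((((hScont f₀).comp continuous_snd).sub continuous_const).norm.tendsto _)
    simpa using h1.add h2
  exact squeeze_zero' (Eventually.of_forall fun _ => norm_nonneg _) hev hlim

theorem stmt6
    {H : Type*} [NormedAddCommGroup H] [InnerProductSpace ℝ H]
    [CompleteSpace H] [TopologicalSpace.SeparableSpace H]
    (ι : H →ₗ[ℝ] (ℝ≥0 → ℝ)) (hι : Function.Injective ι)
    (hH1 : Continuous fun f : H => ι f 0)
    (S : ℝ≥0 → H →L[ℝ] H)
    (hshift : ∀ (h : ℝ≥0) (f : H) (x : ℝ≥0), ι (S h f) x = ι f (x + h))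
    (hS0 : S 0 = ContinuousLinearMap.id ℝ H)
    (hSadd : ∀ a b : ℝ≥0, S (a + b) = (S a).comp (S b))
    (hScont : ∀ f : H, Continuous fun h : ℝ≥0 => S h f) :
    -- (f, x) ↦ (Ψf)(x) is jointly continuous
    Continuous (fun p : H × ℝ≥0 =>
      1 - Real.exp (-∫ s in (0:ℝ)..(p.2:ℝ), ι p.1 s.toNNReal)) ∧
    -- (f, x) ↦ ∂_x(Ψf)(x) = (ι f)(x) · exp(−∫₀ˣ (ι f)(s) ds) is jointly continuous
    Continuous (fun p : H × ℝ≥0 =>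
      ι p.1 p.2 * Real.exp (-∫ s in (0:ℝ)..(p.2:ℝ), ι p.1 s.toNNReal)) := by
  have hjoint : Continuous fun p : H × ℝ≥0 => ι p.1 p.2 := by
    have : (fun p : H × ℝ≥0 => ι p.1 p.2) = (fun f : H => ι f 0) ∘
        fun p : H × ℝ≥0 => S p.2 p.1 := by
      ext p
      simp [hshift p.2 p.1 0]
    rw [this]
    exact hH1.comp (semigroup_joint_cont S hScont)
  have huncurry : Continuous (Function.uncurry fun (f : H) (s : ℝ) => ι f s.toNNReal) :=
    hjoint.comp (continuous_fst.prodMk (continuous_real_toNNReal.comp continuous_snd))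
  have hint : Continuous fun p : H × ℝ => ∫ t in (0:ℝ)..p.2, ι p.1 t.toNNReal := by
    have h := intervalIntegral.continuous_parametric_primitive_of_continuous (μ := volume)
      (f := fun (f : H) (s : ℝ) => ι f s.toNNReal) (a₀ := 0) huncurry
    simpa using h
  have hint' : Continuous fun p : H × ℝ≥0 =>
      ∫ t in (0:ℝ)..(p.2:ℝ), ι p.1 t.toNNReal :=
    by exact
      hint.comp (continuous_fst.prodMk (NNReal.continuous_coe.comp continuous_snd))
  have hexp : Continuous fun p : H × ℝ≥0 =>
      Real.exp (-∫ s in (0:ℝ)..(p.2:ℝ), ι p.1 s.toNNReal) :=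
    Real.continuous_exp.comp hint'.neg
  exact ⟨continuous_const.sub hexp, hjoint.mul hexp⟩
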